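/- Let F ⊆ E, K := Ch_D(F), and suppose C is a circuit of M_D with C ⊆ F and ta_D(C) ∩ K ≠ ∅. Then for every element e ∈ ta_D(C) ∩ K, there exists a circuit C' of M_D such that C' ⊆ K and e ∈ ta_D(C') ⊆ ta_D(C) ∩ K. -/

import Mathlib

variable {α : Type*}

/-- The rank (in `ℕ∞`) of a subset `X`: the largest size of an independent subset
of `X`. -/
noncomputable def erank (M : Matroid α) (X : Set α) : ℕ∞ :=
  ⨆ I ∈ {I : Set α | M.Indep I ∧ I ⊆ X}, I.encard

/-- A circuit of a matroid is an inclusion-wise minimal dependent set. -/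
def Matroid.IsCircuit' (M : Matroid α) (C : Set α) : Prop :=
  M.Dep C ∧ ∀ ⦃D : Set α⦄, D ⊂ C → M.Indep D

/-- The union of the levels `T 0, …, T (s-1)`. -/
def prevT (T : ℕ → Set α) (s : ℕ) : Set α := ⋃ j ∈ Finset.range s, T j

/-- The `≽`-maximal elements of `X`. -/
def heads (pref : α → α → Prop) (X : Set α) : Set α := {e ∈ X | ∀ f ∈ X, pref e f}

/-- The `≽`-minimal elements of `X`. -/
def tails (pref : α → α → Prop) (X : Set α) : Set α := {e ∈ X | ∀ f ∈ X, pref f e}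

/-- `e ≻ f`: strict preference. -/
def SPref (pref : α → α → Prop) (e f : α) : Prop := pref e f ∧ ¬ pref f e

/-- The level decomposition of `F` produced by Algorithm 1: each level `T s`
consists of the `≽`-maximal elements of what remains of `F` after removing the
earlier levels, and the levels exhaust `F`. -/
def IsLevels (pref : α → α → Prop) (F : Set α) (k : ℕ) (T : ℕ → Set α) : Prop :=
  prevT T k = F ∧ ∀ s < k, T s = heads pref (F \ prevT T s)

/-- Independence in the chain-decomposition matroid `M⟨F⟩` (the direct sum of the
minors `M_s = (M|(T 0 ∪ ⋯ ∪ T s)) / (T 0 ∪ ⋯ ∪ T (s-1))`): `I ⊆ F` and each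
block `I ∩ T s` is independent in `M_s`, i.e. satisfies the contraction rank
condition `rk((I ∩ T s) ∪ prevT s) = rk(prevT s) + |I ∩ T s|`. -/
def ChainIndep (M : Matroid α) (k : ℕ) (T : ℕ → Set α) (I : Set α) : Prop :=
  I ⊆ prevT T k ∧
  ∀ s < k, erank M ((I ∩ T s) ∪ prevT T s) = erank M (prevT T s) + (I ∩ T s).encard

/-- A base of the chain-decomposition matroid: a maximal independent set. -/
def ChainBase (M : Matroid α) (k : ℕ) (T : ℕ → Set α) (B : Set α) : Prop :=
  ChainIndep M k T B ∧ ∀ J : Set α, ChainIndep M k T J → B ⊆ J → J = B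

/-- A circuit of the chain-decomposition matroid: a minimal dependent set. -/
def ChainCircuit (M : Matroid α) (k : ℕ) (T : ℕ → Set α) (C : Set α) : Prop :=
  C ⊆ prevT T k ∧ ¬ ChainIndep M k T C ∧ ∀ ⦃D : Set α⦄, D ⊂ C → ChainIndep M k T D

/-- The greedy choice set `Ch(F)` (Algorithm 3): an element `e` of the level `T s`
belongs to `Ch(F)` iff `{e}` is independent in the contraction of `M` by the
earlier levels `T 0 ∪ ⋯ ∪ T (s-1)`. -/
def chooseSet (M : Matroid α) (k : ℕ) (T : ℕ → Set α) : Set α :=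
  {e | ∃ s < k, e ∈ T s ∧ erank M ({e} ∪ prevT T s) = erank M (prevT T s) + 1}



/- Auxiliary lemmas -/

lemma encard_le_erank {M : Matroid α} {I X : Set α} (hI : M.Indep I) (hIX : I ⊆ X) :
    I.encard ≤ erank M X := by
  refine le_iSup₂_of_le I ⟨hI, hIX⟩ le_rfl

lemma erank_le {M : Matroid α} {X : Set α} {b : ℕ∞}
    (h : ∀ I, M.Indep I → I ⊆ X → I.encard ≤ b) : erank M X ≤ b :=
  iSup₂_le fun I hI => h I hI.1 hI.2

lemma erank_mono (M : Matroid α) {X Y : Set α} (h : X ⊆ Y) : erank M X ≤ erank M Y :=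
  erank_le fun I hI hIX => encard_le_erank hI (hIX.trans h)

lemma erank_attained {M : Matroid α} {X : Set α} (h : erank M X ≠ ⊤) :
    ∃ I, M.Indep I ∧ I ⊆ X ∧ I.encard = erank M X := by
  obtain ⟨m, hm⟩ := WithTop.ne_top_iff_exists.mp h
  rcases Nat.eq_zero_or_pos m with h0 | hpos
  · exact ⟨∅, M.empty_indep, Set.empty_subset X, by
      refine le_antisymm (by simp) ?_
      rw [← hm, h0]
      exact le_of_eq (by simp; rfl)⟩
  · have hlt : ((m - 1 : ℕ) : ℕ∞) < erank M X := by
      rw [← hm]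
      exact WithTop.coe_lt_coe.mpr (Nat.sub_lt hpos one_pos)
    rw [erank, lt_iSup_iff] at hlt
    obtain ⟨I, hI⟩ := hlt
    rw [lt_iSup_iff] at hI
    obtain ⟨⟨hind, hsub⟩, hcard⟩ := hI
    refine ⟨I, hind, hsub, le_antisymm (encard_le_erank hind hsub) ?_⟩
    rw [← hm]
    have : ((m - 1 : ℕ) : ℕ∞) + 1 ≤ I.encard := Order.add_one_le_of_lt hcard
    calc (m : ℕ∞) = ((m - 1 : ℕ) : ℕ∞) + 1 := by
          exact_mod_cast (Nat.succ_pred_eq_of_pos hpos).symm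
      _ ≤ I.encard := this

lemma mem_closure_of_erank_ne {M : Matroid α} {X : Set α} {f : α}
    (hX : X ⊆ M.E) (hf : f ∈ M.E)
    (h : erank M ({f} ∪ X) ≠ erank M X + 1) : f ∈ M.closure X := by
  by_contra hcl
  apply h
  rw [Set.singleton_union]
  have hfX : f ∉ X := fun hmem => hcl (M.subset_closure X hX hmem)
  apply le_antisymm
  · refine erank_le fun J hJ hJX => ?_
    have h1 : M.Indep (J \ {f}) := hJ.subset Set.diff_subset
    have h2 : J \ {f} ⊆ X := by
      intro x hx
      rcases hJX hx.1 with h | h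
      · exact absurd h hx.2
      · exact h
    by_cases hfJ : f ∈ J
    · rw [← Set.encard_diff_singleton_add_one hfJ]
      exact add_le_add_left (encard_le_erank h1 h2) 1
    · rw [Set.diff_singleton_eq_self hfJ] at h1 h2
      exact le_add_right (encard_le_erank h1 h2)
  · rcases eq_or_ne (erank M X) ⊤ with ht | ht
    · rw [ht]
      simp only [top_add, top_le_iff] at *
      exact top_le_iff.mp (ht ▸ erank_mono M (Set.subset_insert f X))
    · obtain ⟨I, hI, hIX, hIcard⟩ := erank_attained ht
      have hfI : f ∉ I := fun hmem => hfX (hIX hmem)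
      have hfcl : f ∉ M.closure I :=
        fun hmem => hcl (M.closure_subset_closure hIX hmem)
      have hins : M.Indep (insert f I) := by
        rw [hI.insert_indep_iff_of_notMem hfI]
        exact ⟨hf, hfcl⟩
      have := encard_le_erank hins (Set.insert_subset_insert hIX)
      rwa [Set.encard_insert_of_notMem hfI, hIcard] at this

lemma exists_fund_circuit {M : Matroid α} {I : Set α} {e : α} (hI : M.Indep I)
    (he : e ∈ M.closure I) (heI : e ∉ I) :
    ∃ C, M.IsCircuit' C ∧ e ∈ C ∧ C \ {e} ⊆ I := by
  have heE : e ∈ M.E := M.mem_ground_of_mem_closure he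
  set S : Set α := {x ∈ I | e ∉ M.closure (I \ {x})} with hS
  have hSI : S ⊆ I := fun x hx => hx.1
  have hindS : M.Indep S := hI.subset hSI
  have heS : e ∉ S := fun h => heI (hSI h)
  -- key : e ∈ M.closure S
  have hkey : e ∈ M.closure S := by
    set J : Set α := {x ∈ I | e ∈ M.closure (I \ {x})} with hJ
    rcases J.eq_empty_or_nonempty with hJe | hJne
    · have : S = I := by
        apply Set.Subset.antisymm hSI
        intro x hx
        refine ⟨hx, fun hmem => ?_⟩
        exact absurd (show x ∈ J from ⟨hx, hmem⟩) (by simp [hJe])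
      rwa [this]
    · have hfam : ((fun x => I \ {x}) '' J).Nonempty := hJne.image _
      have hsub : ∀ D ∈ (fun x => I \ {x}) '' J, D ⊆ I := by
        rintro D ⟨x, -, rfl⟩; exact Set.diff_subset
      have hsInter : ⋂₀ ((fun x => I \ {x}) '' J) = I \ J := by
        rw [Set.sInter_image]
        ext y
        simp only [Set.mem_iInter, Set.mem_diff, Set.mem_singleton_iff]
        constructor
        · intro h
          obtain ⟨x0, hx0⟩ := hJne
          refine ⟨(h x0 hx0).1, fun hyJ => (h y hyJ).2 rfl⟩
        · rintro ⟨hyI, hyJ⟩ x hxJ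
          exact ⟨hyI, fun hyx => hyJ (hyx ▸ hxJ)⟩
      have hIS : I \ J = S := by
        ext x
        simp only [Set.mem_diff, hS, Set.mem_setOf_eq, hJ]
        tauto
      have := hI.closure_sInter_eq_biInter_closure_of_forall_subset hfam hsub
      rw [hsInter, hIS] at this
      rw [this, Set.mem_iInter₂]
      rintro D ⟨x, hxJ, rfl⟩
      exact hxJ.2
  refine ⟨insert e S, ⟨?_, ?_⟩, Set.mem_insert e S, ?_⟩
  case refine_3 =>
    intro y hy
    exact hSI ((Set.mem_insert_iff.mp hy.1).resolve_left hy.2)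
  · rw [hindS.insert_dep_iff]
    exact ⟨hkey, heS⟩
  · intro D hD
    by_cases heD : e ∈ D
    · obtain ⟨x, hxC, hxD⟩ := Set.exists_of_ssubset hD
      have hxe : x ≠ e := fun h => hxD (h ▸ heD)
      have hxS : x ∈ S := hxC.resolve_left hxe
      have hDsub : D \ {e} ⊆ I \ {x} := by
        intro y hy
        have hyS : y ∈ S := (hD.1 hy.1).resolve_left hy.2
        refine ⟨hSI hyS, fun hyx => hxD ?_⟩
        rw [Set.mem_singleton_iff] at hyx
        exact hyx ▸ hy.1
      have hind : M.Indep (D \ {e}) := (hI.subset Set.diff_subset).subset hDsub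
      have hecl : e ∉ M.closure (D \ {e}) :=
        fun h => hxS.2 (M.closure_subset_closure hDsub h)
      have : M.Indep (insert e (D \ {e})) := by
        rw [hind.insert_indep_iff_of_notMem (fun h => h.2 rfl)]
        exact ⟨heE, hecl⟩
      rwa [Set.insert_diff_singleton, Set.insert_eq_of_mem heD] at this
    · refine hindS.subset fun y hy => ?_
      exact (hD.1 hy).resolve_left fun h => heD (h ▸ hy)

lemma mem_prevT {T : ℕ → Set α} {s : ℕ} {x : α} :
    x ∈ prevT T s ↔ ∃ j < s, x ∈ T j := by
  simp [prevT]

lemma prevT_mono (T : ℕ → Set α) {j s : ℕ} (h : j ≤ s) : prevT T j ⊆ prevT T s := by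
  intro x hx
  rw [mem_prevT] at hx ⊢
  obtain ⟨i, hi, hx⟩ := hx
  exact ⟨i, lt_of_lt_of_le hi h, hx⟩

lemma subset_prevT (T : ℕ → Set α) {j s : ℕ} (h : j < s) : T j ⊆ prevT T s :=
  fun x hx => mem_prevT.mpr ⟨j, h, hx⟩

section levels
variable {pref : α → α → Prop} {F : Set α} {k : ℕ} {T : ℕ → Set α}

lemma level_subset_F (hT : IsLevels pref F k T) {s : ℕ} (hs : s < k) : T s ⊆ F :=
  hT.1 ▸ subset_prevT T hs

lemma level_not_prev (hT : IsLevels pref F k T) {s : ℕ} (hs : s < k) :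
    T s ⊆ F \ prevT T s := by
  rw [hT.2 s hs]; exact fun x hx => hx.1

/-- every earlier-level element is strictly preferred to a later-level element -/
lemma spref_of_prev (hT : IsLevels pref F k T) (htrans : Transitive pref)
    {s : ℕ} (hs : s < k) {f g : α} (hf : f ∈ T s) (hg : g ∈ prevT T s) :
    SPref pref g f := by
  obtain ⟨j, hj, hgj⟩ := mem_prevT.mp hg
  have hjk : j < k := hj.trans hs
  have hgh : g ∈ heads pref (F \ prevT T j) := (hT.2 j hjk) ▸ hgj
  have hfd : f ∈ F \ prevT T s := level_not_prev hT hs hf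
  have hfj : f ∈ F \ prevT T j := ⟨hfd.1, fun h => hfd.2 (prevT_mono T hj.le h)⟩
  refine ⟨hgh.2 f hfj, fun hfg => ?_⟩
  have : f ∈ heads pref (F \ prevT T j) :=
    ⟨hfj, fun y hy => htrans hfg (hgh.2 y hy)⟩
  exact hfd.2 (subset_prevT T hj ((hT.2 j hjk) ▸ this))
end levels


section main
variable {M : Matroid α} {pref : α → α → Prop} {F : Set α} {k : ℕ} {T : ℕ → Set α}

lemma chooseSet_subset_F (hT : IsLevels pref F k T) : chooseSet M k T ⊆ F := by
  rintro x ⟨s, hs, hxT, -⟩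
  exact level_subset_F hT hs hxT

lemma mem_closure_prevT_of_not_choose (hT : IsLevels pref F k T) (hF : F ⊆ M.E)
    {s : ℕ} (hs : s < k) {f : α} (hf : f ∈ T s) (hfK : f ∉ chooseSet M k T) :
    f ∈ M.closure (prevT T s) := by
  have hprevE : prevT T s ⊆ M.E := (prevT_mono T hs.le).trans (hT.1 ▸ hF)
  have hfE : f ∈ M.E := hF (level_subset_F hT hs hf)
  refine mem_closure_of_erank_ne hprevE hfE fun heq => ?_
  exact hfK ⟨s, hs, hf, heq⟩

lemma prevT_subset_closure_choose (hT : IsLevels pref F k T) (hF : F ⊆ M.E) :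
    ∀ s ≤ k, prevT T s ⊆ M.closure (chooseSet M k T ∩ prevT T s) := by
  intro s
  induction s using Nat.strong_induction_on with
  | _ s ih =>
    intro hsk x hx
    obtain ⟨j, hj, hxj⟩ := mem_prevT.mp hx
    have hjk : j < k := lt_of_lt_of_le hj hsk
    have hKE : chooseSet M k T ∩ prevT T s ⊆ M.E :=
      fun y hy => hF (chooseSet_subset_F hT hy.1)
    by_cases hxK : x ∈ chooseSet M k T
    · exact M.subset_closure _ hKE ⟨hxK, hx⟩
    · have h1 : x ∈ M.closure (prevT T j) :=
        mem_closure_prevT_of_not_choose hT hF hjk hxj hxK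
      have h2 : prevT T j ⊆ M.closure (chooseSet M k T ∩ prevT T j) :=
        ih j hj (hjk.le)
      have h3 : M.closure (prevT T j) ⊆ M.closure (chooseSet M k T ∩ prevT T j) :=
        M.closure_subset_closure_of_subset_closure h2
      exact M.closure_subset_closure
        (Set.inter_subset_inter_right _ (prevT_mono T hj.le)) (h3 h1)

end main

/-- Lemma 16: with `K := Ch(F)`, if `C` is a circuit of `M` with `C ⊆ F` and
`ta(C) ∩ K ≠ ∅`, then for every `e ∈ ta(C) ∩ K` there is a circuit `C'` of `M`
with `C' ⊆ K` and `e ∈ ta(C') ⊆ ta(C) ∩ K`. -/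
theorem outside_circuit_chooseSet (M : Matroid α) (pref : α → α → Prop)
    (htrans : Transitive pref)
    (htotal : ∀ e ∈ M.E, ∀ f ∈ M.E, pref e f ∨ pref f e)
    (hsingle : ∀ e ∈ M.E, M.Indep {e})
    (F : Set α) (hF : F ⊆ M.E) (k : ℕ) (T : ℕ → Set α)
    (hT : IsLevels pref F k T)
    (C : Set α) (hC : M.IsCircuit' C) (hCF : C ⊆ F)
    (hne : (tails pref C ∩ chooseSet M k T).Nonempty)
    (e : α) (he : e ∈ tails pref C ∩ chooseSet M k T) :
    ∃ C' : Set α, M.IsCircuit' C' ∧ C' ⊆ chooseSet M k T ∧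
      e ∈ tails pref C' ∧ tails pref C' ⊆ tails pref C ∩ chooseSet M k T := by
  classical
  obtain ⟨heT, heK⟩ := he
  have heC : e ∈ C := heT.1
  have hCE : C ⊆ M.E := hC.1.2
  have heE : e ∈ M.E := hCE heC
  set K := chooseSet M k T with hK
  have hKF : K ⊆ F := chooseSet_subset_F hT
  have hKE : K ⊆ M.E := hKF.trans hF
  set B : Set α := {g ∈ K | ∃ f ∈ C, SPref pref g f} with hB
  set Z : Set α := ((C ∩ K) \ {e}) ∪ B with hZ
  have hZK : Z ⊆ K := by
    rintro x (⟨⟨-, hx⟩, -⟩ | ⟨hx, -⟩) <;> exact hx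
  have hZE : Z ⊆ M.E := hZK.trans hKE
  have heZ : e ∉ Z := by
    rintro (⟨-, hne'⟩ | ⟨-, f, hfC, hef⟩)
    · exact hne' rfl
    · exact hef.2 (heT.2 f hfC)
  -- C \ {e} ⊆ closure Z
  have hCcl : C \ {e} ⊆ M.closure Z := by
    rintro x ⟨hxC, hxe⟩
    by_cases hxK : x ∈ K
    · exact M.subset_closure Z hZE (Or.inl ⟨⟨hxC, hxK⟩, hxe⟩)
    · obtain ⟨s, hs, hxT⟩ := mem_prevT.mp (hT.1 ▸ hCF hxC : x ∈ prevT T k)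
      have h1 : x ∈ M.closure (prevT T s) :=
        mem_closure_prevT_of_not_choose hT hF hs hxT hxK
      have h2 : prevT T s ⊆ M.closure (K ∩ prevT T s) :=
        prevT_subset_closure_choose hT hF s hs.le
      have h3 : K ∩ prevT T s ⊆ B := by
        rintro g ⟨hgK, hgp⟩
        exact ⟨hgK, x, hxC, spref_of_prev hT htrans hs hxT hgp⟩
      have h4 : M.closure (prevT T s) ⊆ M.closure Z :=
        M.closure_subset_closure_of_subset_closure
          (h2.trans (M.closure_subset_closure (h3.trans Set.subset_union_right)))
      exact h4 h1
  -- e ∈ closure (C \ {e})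
  have heclC : e ∈ M.closure (C \ {e}) := by
    have hind : M.Indep (C \ {e}) := hC.2 (Set.sdiff_singleton_ssubset.mpr heC)
    have hdep : M.Dep (insert e (C \ {e})) := by
      rw [Set.insert_diff_singleton, Set.insert_eq_of_mem heC]
      exact hC.1
    exact ((hind.insert_dep_iff).mp hdep).1
  have heclZ : e ∈ M.closure Z :=
    M.closure_subset_closure_of_subset_closure hCcl heclC
  -- fundamental circuit through a basis of Z
  obtain ⟨I, hIb⟩ := M.exists_isBasis Z hZE
  have heclI : e ∈ M.closure I := hIb.closure_eq_closure ▸ heclZ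
  have heI : e ∉ I := fun h => heZ (hIb.subset h)
  obtain ⟨C', hcirc, heC', hsub⟩ := exists_fund_circuit hIb.indep heclI heI
  have hC'Z : ∀ y ∈ C', y ≠ e → y ∈ Z := fun y hy hne' => hIb.subset (hsub ⟨hy, hne'⟩)
  have hC'K : C' ⊆ K := by
    intro y hy
    by_cases hye : y = e
    · exact hye ▸ heK
    · exact hZK (hC'Z y hy hye)
  have hprefy : ∀ y ∈ C', pref y e := by
    intro y hy
    by_cases hye : y = e
    · subst hye
      exact (htotal y (hKE (hC'K hy)) y (hKE (hC'K hy))).elim id id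
    · rcases hC'Z y hy hye with ⟨⟨hyC, -⟩, -⟩ | ⟨-, f, hfC, hyf⟩
      · exact heT.2 y hyC
      · exact htrans hyf.1 (heT.2 f hfC)
  refine ⟨C', hcirc, hC'K, ⟨heC', hprefy⟩, ?_⟩
  rintro g ⟨hgC', hgmin⟩
  have hgK : g ∈ K := hC'K hgC'
  by_cases hge : g = e
  · exact hge ▸ ⟨heT, heK⟩
  · have hpeg : pref e g := hgmin e heC'
    rcases hC'Z g hgC' hge with ⟨⟨hgC, -⟩, -⟩ | ⟨-, f, hfC, hgf⟩
    · exact ⟨⟨hgC, fun y hy => htrans (heT.2 y hy) hpeg⟩, hgK⟩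
    · exact absurd (htrans (heT.2 f hfC) hpeg) hgf.2
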